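/- Let M be a 3-connected matroid, let (X, {e}, Y) be a vertical 3-separation of M, and let y ∈ Y. If y ∈ cl(X), then (X ∪ {y}, {e}, Y − {y}) is a vertical 3-separation of M. If instead y ∈ cl*(X) and e is not contained in any triangle of M, then (X ∪ {y}, {e}, Y − {y}) is also a vertical 3-separation of M. -/

import Mathlib

open Matroid Set

namespace DetPairs

variable {α : Type*}

/-- The rank of a set in a matroid: the maximum size of an independent subset
(as an integer, for convenient arithmetic). -/
noncomputable def r (M : Matroid α) (X : Set α) : ℤ :=
  ((sSup (Set.ncard '' {I | M.Indep I ∧ I ⊆ X}) : ℕ) : ℤ)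

/-- The connectivity function `λ_M(X) = r(X) + r(E − X) − r(M)`. -/
noncomputable def lam (M : Matroid α) (X : Set α) : ℤ :=
  r M X + r M (M.E \ X) - r M M.E

/-- Local connectivity `⊓(X,Y) = r(X) + r(Y) − r(X ∪ Y)`. -/
noncomputable def localConn (M : Matroid α) (X Y : Set α) : ℤ :=
  r M X + r M Y - r M (X ∪ Y)

/-- A circuit: a minimal dependent set. -/
def Circuit (M : Matroid α) (C : Set α) : Prop :=
  C ⊆ M.E ∧ ¬ M.Indep C ∧ ∀ D, D ⊂ C → M.Indep D

/-- A cocircuit: a circuit of the dual. -/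
def Cocircuit (M : Matroid α) (C : Set α) : Prop := Circuit M✶ C

/-- A triangle: a 3-element circuit. -/
def Triangle (M : Matroid α) (T : Set α) : Prop := Circuit M T ∧ T.ncard = 3

/-- A triad: a 3-element cocircuit. -/
def Triad (M : Matroid α) (T : Set α) : Prop := Cocircuit M T ∧ T.ncard = 3

/-- A quad: a 4-element set that is both a circuit and a cocircuit. -/
def Quad (M : Matroid α) (Q : Set α) : Prop :=
  Circuit M Q ∧ Cocircuit M Q ∧ Q.ncard = 4

/-- Deletion of a set of elements. -/
def Del (M : Matroid α) (D : Set α) : Matroid α := M ↾ (M.E \ D)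

/-- Contraction of a set of elements. -/
def Con (M : Matroid α) (C : Set α) : Matroid α := (M✶ ↾ (M.E \ C))✶

/-- `M` is 3-connected: it has no `k`-separation for `k = 1, 2`, where a
`k`-separation is a set `X` with `λ(X) = k − 1`, `|X| ≥ k` and `|E − X| ≥ k`. -/
def ThreeConnected (M : Matroid α) : Prop :=
  ∀ k : ℕ, 0 < k → k < 3 → ∀ X ⊆ M.E,
    ¬ (lam M X = (k : ℤ) - 1 ∧ (k : ℤ) ≤ X.ncard ∧ (k : ℤ) ≤ (M.E \ X).ncard)

/-- A detachable pair: distinct elements `e, f` such that `M \ e \ f` or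
`M / e / f` is 3-connected. -/
def DetachablePair (M : Matroid α) (e f : α) : Prop :=
  e ≠ f ∧ e ∈ M.E ∧ f ∈ M.E ∧
    (ThreeConnected (Del M {e, f}) ∨ ThreeConnected (Con M {e, f}))

/-- The triple of elements with indices `i, i+1, i+2` in an ordering. -/
def tri (e : ℕ → α) (i : ℕ) : Set α := {e i, e (i + 1), e (i + 2)}

/-- `(e 0, …, e (n-1))` is a fan ordering of length `n ≥ 3` in `M`:
consecutive triples alternate between triangles and triads. -/
def FanOrd (M : Matroid α) (n : ℕ) (e : ℕ → α) : Prop :=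
  3 ≤ n ∧ Set.InjOn e (Set.Iio n) ∧ (∀ i < n, e i ∈ M.E) ∧
    (Triangle M (tri e 0) ∨ Triad M (tri e 0)) ∧
    ∀ i, i + 3 < n →
      (Triangle M (tri e i) → Triad M (tri e (i + 1))) ∧
      (Triad M (tri e i) → Triangle M (tri e (i + 1)))

/-- A fan (as a set): either a 2-element subset of the ground set, or the
underlying set of a fan ordering of length at least 3. -/
def IsFan (M : Matroid α) (F : Set α) : Prop :=
  (F ⊆ M.E ∧ F.ncard = 2) ∨ ∃ n e, FanOrd M n e ∧ F = e '' Set.Iio n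

/-- A maximal fan: a fan contained in no strictly larger fan. -/
def MaximalFan (M : Matroid α) (F : Set α) : Prop :=
  IsFan M F ∧ ∀ F', IsFan M F' → F ⊆ F' → F' = F

/-- `M` is a wheel or a whirl: its ground set has a cyclic ordering of even size
`2n` in which consecutive triples alternate between triangles and triads. -/
def IsWheelOrWhirl (M : Matroid α) : Prop :=
  ∃ (n : ℕ) (e : ℕ → α), 2 ≤ n ∧ Set.InjOn e (Set.Iio (2 * n)) ∧
    M.E = e '' Set.Iio (2 * n) ∧
    ∀ i < 2 * n,
      (i % 2 = 0 → Triangle M {e i, e ((i + 1) % (2 * n)), e ((i + 2) % (2 * n))}) ∧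
      (i % 2 = 1 → Triad M {e i, e ((i + 1) % (2 * n)), e ((i + 2) % (2 * n))})

/-- An `M(K₄)`-separator: a 6-element set `{a,b,c,x,y,z}` where `{x,y,z}` is a
triad and `{a,b,c}`, `{a,x,y}`, `{b,x,z}`, `{c,y,z}` are triangles. -/
def MK4Sep (M : Matroid α) (S : Set α) : Prop :=
  ∃ a b c x y z : α, S = {a, b, c, x, y, z} ∧ S.ncard = 6 ∧
    Triad M {x, y, z} ∧ Triangle M {a, b, c} ∧ Triangle M {a, x, y} ∧
    Triangle M {b, x, z} ∧ Triangle M {c, y, z}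

/-- A vertical 3-separation `(X, {e}, Y)` of `M`. -/
def VertThreeSep (M : Matroid α) (X : Set α) (e : α) (Y : Set α) : Prop :=
  X ∪ {e} ∪ Y = M.E ∧ Disjoint X Y ∧ e ∉ X ∧ e ∉ Y ∧
    lam M X = 2 ∧ lam M Y = 2 ∧ e ∈ M.closure X ∧ e ∈ M.closure Y ∧
    3 ≤ r M X ∧ 3 ≤ r M Y

/-- `N` is a simplification of `M`: a restriction of `M` to a set of
representatives, one from each parallel class of nonloops. -/
def SimplificationOf (M N : Matroid α) : Prop :=
  ∃ X : Set α, (∀ x ∈ X, x ∈ M.E ∧ x ∉ M.closure ∅) ∧ N = M ↾ X ∧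
    ∀ y ∈ M.E, y ∉ M.closure ∅ →
      ∃! x, x ∈ X ∧ M.closure {y} = M.closure {x}

section Aux

variable {M : Matroid α} {I J K B X Y Z D : Set α} {e y : α}

lemma r_bddAbove (M : Matroid α) [M.Finite] (X : Set α) :
    BddAbove (Set.ncard '' {I | M.Indep I ∧ I ⊆ X}) := by
  refine ⟨M.E.ncard, ?_⟩
  rintro n ⟨I, ⟨hI, -⟩, rfl⟩
  exact ncard_le_ncard hI.subset_ground M.ground_finite

lemma le_r [M.Finite] (hI : M.Indep I) (hIX : I ⊆ X) : (I.ncard : ℤ) ≤ r M X := by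
  unfold r
  have := le_csSup (r_bddAbove M X) (mem_image_of_mem _ (⟨hI, hIX⟩ : I ∈ {I | M.Indep I ∧ I ⊆ X}))
  exact_mod_cast this

lemma r_le_forall {n : ℤ} (h : ∀ K, M.Indep K → K ⊆ X → (K.ncard : ℤ) ≤ n) : r M X ≤ n := by
  unfold r
  have hn : (0 : ℤ) ≤ n := by simpa using h ∅ M.empty_indep (empty_subset X)
  lift n to ℕ using hn
  have : sSup (Set.ncard '' {I | M.Indep I ∧ I ⊆ X}) ≤ n := by
    refine csSup_le ⟨0, ⟨∅, ⟨M.empty_indep, empty_subset X⟩, by simp⟩⟩ ?_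
    rintro m ⟨I, ⟨hI, hIX⟩, rfl⟩
    exact_mod_cast h I hI hIX
  exact_mod_cast this

lemma r_nonneg (M : Matroid α) (X : Set α) : 0 ≤ r M X := Int.natCast_nonneg _

lemma r_eq_basis' [M.Finite] (hI : M.IsBasis' I X) : r M X = I.ncard := by
  refine le_antisymm (r_le_forall fun K hK hKX => ?_) (le_r hI.indep hI.subset)
  obtain ⟨J, hJ, hKJ⟩ := hK.subset_isBasis'_of_subset hKX
  have h1 : J.encard = I.encard := hJ.encard_eq_encard hI
  have h2 : J.ncard = I.ncard := by rw [ncard_def, h1, ← ncard_def]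
  have h3 : K.ncard ≤ J.ncard :=
    ncard_le_ncard hKJ (M.set_finite J hJ.indep.subset_ground)
  exact_mod_cast h3.trans h2.le

lemma r_mono (M : Matroid α) [M.Finite] (h : X ⊆ Y) : r M X ≤ r M Y := by
  obtain ⟨I, hI⟩ := M.exists_isBasis' X
  rw [r_eq_basis' hI]
  exact le_r hI.indep (hI.subset.trans h)

lemma r_le_ncard [M.Finite] (hX : X ⊆ M.E) : r M X ≤ X.ncard := by
  obtain ⟨I, hI⟩ := M.exists_isBasis' X
  rw [r_eq_basis' hI]
  exact_mod_cast ncard_le_ncard hI.subset (M.set_finite X hX)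

lemma r_insert_le (M : Matroid α) [M.Finite] : r M (insert e X) ≤ r M X + 1 := by
  obtain ⟨I, hI⟩ := M.exists_isBasis' (insert e X)
  rw [r_eq_basis' hI]
  have hfin : I.Finite := M.set_finite I hI.indep.subset_ground
  have h1 : (I \ {e}).ncard + 1 ≥ I.ncard := by
    have : I ⊆ insert e (I \ {e}) := by intro a ha; by_cases h : a = e <;> simp [h, ha]
    calc I.ncard ≤ (insert e (I \ {e})).ncard :=
          ncard_le_ncard this (hfin.diff.insert e)
      _ ≤ (I \ {e}).ncard + 1 := ncard_insert_le _ _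
  have h2 : ((I \ {e}).ncard : ℤ) ≤ r M X := by
    refine le_r (hI.indep.subset diff_subset) ?_
    intro a ⟨haI, hae⟩
    rcases hI.subset haI with h | h
    · exact absurd h hae
    · exact h
  have := le_r hI.indep (subset_refl _)
  omega

lemma r_eq_of_subset_closure [M.Finite] (hX : X ⊆ M.E) (hXY : X ⊆ Y)
    (hY : Y ⊆ M.closure X) : r M Y = r M X := by
  obtain ⟨I, hI⟩ := M.exists_isBasis X hX
  have hIY : M.IsBasis I Y :=
    hI.indep.isBasis_of_subset_of_subset_closure (hI.subset.trans hXY)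
      (hY.trans_eq hI.closure_eq_closure.symm)
  rw [r_eq_basis' hIY.isBasis', r_eq_basis' hI.isBasis']

lemma mem_closure_iff_r [M.Finite] (hX : X ⊆ M.E) (he : e ∈ M.E) :
    e ∈ M.closure X ↔ r M (insert e X) = r M X := by
  constructor
  · intro h
    exact r_eq_of_subset_closure hX (subset_insert _ _)
      (insert_subset h (M.subset_closure X hX))
  · intro h
    by_contra hcl
    obtain ⟨I, hI⟩ := M.exists_isBasis X hX
    have heI : e ∉ I := fun hme => hcl (M.subset_closure X hX (hI.subset hme))
    have hind : M.Indep (insert e I) := by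
      rw [hI.indep.insert_indep_iff_of_notMem heI]
      exact ⟨he, fun hh => hcl (hI.closure_eq_closure ▸ hh)⟩
    have h1 : ((insert e I).ncard : ℤ) ≤ r M (insert e X) :=
      le_r hind (insert_subset_insert hI.subset)
    have h2 : (insert e I).ncard = I.ncard + 1 :=
      ncard_insert_of_notMem heI (M.set_finite I hI.indep.subset_ground)
    rw [h, r_eq_basis' hI.isBasis'] at h1
    omega

lemma r_base [M.Finite] (hB : M.IsBase B) : r M M.E = B.ncard :=
  r_eq_basis' hB.isBasis_ground.isBasis'


lemma base_inter_basis_eq [M.Finite] (hI : M.IsBasis I X) (hB : M.IsBase B) (hIB : I ⊆ B) :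
    B ∩ X = I :=
  (hI.eq_of_subset_indep (hB.indep.subset inter_subset_left)
    (subset_inter hIB hI.subset) inter_subset_right).symm

lemma ncard_split (hB : B.Finite) (X : Set α) :
    ((B ∩ X).ncard : ℤ) + ((B \ X).ncard : ℤ) = B.ncard := by
  have := ncard_union_eq (disjoint_of_subset_left inter_subset_right disjoint_sdiff_right)
    (hB.inter_of_left X) hB.diff
  rw [inter_union_diff] at this
  exact_mod_cast this.symm

lemma lam_nonneg [M.Finite] (hX : X ⊆ M.E) : 0 ≤ lam M X := by
  obtain ⟨I, hI⟩ := M.exists_isBasis X hX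
  obtain ⟨B, hB, hIB⟩ := hI.indep.exists_isBase_superset
  have hBfin : B.Finite := M.set_finite B hB.subset_ground
  have hBX : B ∩ X = I := base_inter_basis_eq hI hB hIB
  have h1 : ((B \ X).ncard : ℤ) ≤ r M (M.E \ X) :=
    le_r (hB.indep.subset diff_subset) (diff_subset_diff_left hB.subset_ground)
  have h2 := r_base hB
  have h3 := r_eq_basis' hI.isBasis'
  have h4 := ncard_split hBfin X
  rw [hBX] at h4
  unfold lam
  omega

lemma r_dual [M.Finite] (hX : X ⊆ M.E) :
    r M✶ X = (X.ncard : ℤ) - r M M.E + r M (M.E \ X) := by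
  obtain ⟨I, hI⟩ := M.exists_isBasis (M.E \ X) diff_subset
  obtain ⟨B, hB, hIB⟩ := hI.indep.exists_isBase_superset
  have hBfin : B.Finite := M.set_finite B hB.subset_ground
  have hXfin : X.Finite := M.set_finite X hX
  have hBI : B ∩ (M.E \ X) = I := base_inter_basis_eq hI hB hIB
  have hrI := r_eq_basis' hI.isBasis'
  have hrB := r_base hB
  have hBdX : B \ X = I := by
    rw [← hBI]; ext a
    simp only [mem_diff, mem_inter_iff]
    exact ⟨fun h => ⟨h.1, hB.subset_ground h.1, h.2⟩, fun h => ⟨h.1, h.2.2⟩⟩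
  refine le_antisymm (r_le_forall fun K hK hKX => ?_) ?_
  · obtain ⟨hKE, B', hB', hdisj⟩ := dual_indep_iff_exists'.mp hK
    have hB'fin : B'.Finite := M.set_finite B' hB'.subset_ground
    have h1 : ((B' \ X).ncard : ℤ) ≤ r M (M.E \ X) :=
      le_r (hB'.indep.subset diff_subset) (diff_subset_diff_left hB'.subset_ground)
    have h2 := r_base hB'
    have h3 := ncard_split hB'fin X
    have h4 : ((K ∪ (X ∩ B')).ncard : ℤ) = K.ncard + (X ∩ B').ncard := by
      exact_mod_cast ncard_union_eq
        (disjoint_of_subset_right inter_subset_right hdisj)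
        (hXfin.subset hKX) (hXfin.inter_of_left B')
    have h5 : (K ∪ (X ∩ B')).ncard ≤ X.ncard :=
      ncard_le_ncard (union_subset hKX inter_subset_left) hXfin
    have h6 : (X ∩ B').ncard = (B' ∩ X).ncard := by rw [inter_comm]
    omega
  · have hJ : M✶.Indep (X \ B) := by
      rw [dual_indep_iff_exists']
      exact ⟨diff_subset.trans hX, B, hB, disjoint_sdiff_left⟩
    have h1 : (((X \ B)).ncard : ℤ) ≤ r M✶ X := le_r hJ diff_subset
    have h2 := ncard_split hXfin B
    have h3 := ncard_split hBfin X
    have h4 : (X ∩ B).ncard = (B ∩ X).ncard := by rw [inter_comm]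
    rw [hBdX] at h3
    omega

lemma r_diff_of_dual_closure [M.Finite] (hX : X ⊆ M.E) (hyX : y ∉ X)
    (hy : y ∈ M✶.closure X) : r M (M.E \ X) = r M ((M.E \ X) \ {y}) + 1 := by
  have hyE : y ∈ M.E := mem_ground_of_mem_closure (M := M✶) hy
  have hins : insert y X ⊆ M.E := insert_subset hyE hX
  have h := (mem_closure_iff_r (M := M✶) hX hyE).mp hy
  rw [r_dual hins, r_dual hX] at h
  have hEeq : M.E \ insert y X = (M.E \ X) \ {y} := by
    ext a
    simp only [mem_diff, mem_insert_iff, mem_singleton_iff]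
    tauto
  rw [hEeq] at h
  have hc : (insert y X).ncard = X.ncard + 1 :=
    ncard_insert_of_notMem hyX (M.set_finite X hX)
  omega

lemma lam_eq_two [M.Finite] (hM : ThreeConnected M) (hZ : Z ⊆ M.E) (h2 : lam M Z ≤ 2)
    (hc : 2 ≤ Z.ncard) (hcc : 2 ≤ (M.E \ Z).ncard) : lam M Z = 2 := by
  have h0 := hM 1 one_pos (by norm_num) Z hZ
  have h1 := hM 2 two_pos (by norm_num) Z hZ
  have hn := lam_nonneg hZ
  have e0 : lam M Z ≠ 0 := fun h =>
    h0 ⟨by rw [h]; norm_num, by exact_mod_cast (by omega : 1 ≤ Z.ncard),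
      by exact_mod_cast (by omega : 1 ≤ (M.E \ Z).ncard)⟩
  have e1 : lam M Z ≠ 1 := fun h =>
    h1 ⟨by rw [h]; norm_num, by exact_mod_cast hc, by exact_mod_cast hcc⟩
  omega

lemma r_lt_of_dep [M.Finite] (hD : ¬ M.Indep D) (hDE : D ⊆ M.E) : r M D < D.ncard := by
  obtain ⟨I, hI⟩ := M.exists_isBasis' D
  have hne : I ≠ D := fun h => hD (h ▸ hI.indep)
  have : I ⊂ D := ssubset_of_ne_of_subset hne hI.subset
  have := ncard_lt_ncard this (M.set_finite D hDE)
  rw [r_eq_basis' hI]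
  exact_mod_cast this

lemma indep_of_small [M.Finite] (hM : ThreeConnected M) (hD : D ⊆ M.E)
    (h2 : D.ncard ≤ 2) (hE : 5 ≤ M.E.ncard) : M.Indep D := by
  by_contra hdep
  have hDfin : D.Finite := M.set_finite D hD
  have hr := r_lt_of_dep hdep hD
  have hrn := r_nonneg M D
  have hDne : D.Nonempty := by
    rcases D.eq_empty_or_nonempty with h | h
    · exact absurd (h ▸ M.empty_indep) hdep
    · exact h
  have hD1 : 1 ≤ D.ncard := (ncard_pos hDfin).mpr hDne
  have hcc : 3 ≤ (M.E \ D).ncard := by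
    have := ncard_diff hD hDfin
    have := ncard_le_ncard hD M.ground_finite
    omega
  have hlam : lam M D ≤ r M D := by
    have := r_mono M (diff_subset : M.E \ D ⊆ M.E)
    unfold lam; omega
  have hn := lam_nonneg hD
  have h0 := hM 1 one_pos (by norm_num) D hD
  have h1 := hM 2 two_pos (by norm_num) D hD
  have e0 : lam M D ≠ 0 := fun h =>
    h0 ⟨by rw [h]; norm_num, by exact_mod_cast hD1, by exact_mod_cast (by omega : 1 ≤ (M.E \ D).ncard)⟩
  rcases Nat.lt_or_ge D.ncard 2 with hc1 | hc2
  · -- D.ncard = 1, r M D = 0, lam = 0 contradiction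
    omega
  · have hc2' : D.ncard = 2 := le_antisymm h2 hc2
    have e1 : lam M D ≠ 1 := fun h =>
      h1 ⟨by rw [h]; norm_num, by exact_mod_cast hc2, by omega⟩
    omega


end Aux

/-- Moving an element of `Y` across a vertical 3-separation `(X, {e}, Y)`:
if `y ∈ cl(X)`, or `y ∈ cl*(X)` and `e` is in no triangle, then
`(X ∪ {y}, {e}, Y − {y})` is again a vertical 3-separation. -/
theorem stmt14 (M : Matroid α) [M.Finite] (hM : ThreeConnected M)
    {X Y : Set α} {e y : α} (hsep : VertThreeSep M X e Y) (hy : y ∈ Y) :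
    (y ∈ M.closure X → VertThreeSep M (X ∪ {y}) e (Y \ {y})) ∧
    (y ∈ M✶.closure X → (∀ T, Triangle M T → e ∉ T) →
      VertThreeSep M (X ∪ {y}) e (Y \ {y})) := by
  obtain ⟨hU, hdisj, heX, heY, hlX, hlY, hecX, hecY, hrX, hrY⟩ := hsep
  have hd : ∀ a, a ∈ X → a ∉ Y := fun a ha => disjoint_left.mp hdisj ha
  have hmem : ∀ a, a ∈ M.E ↔ (a ∈ X ∨ a = e ∨ a ∈ Y) := by
    intro a; rw [← hU]; simp only [mem_union, mem_singleton_iff]; tauto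
  have hXE : X ⊆ M.E := fun a ha => (hmem a).mpr (Or.inl ha)
  have hYE : Y ⊆ M.E := fun a ha => (hmem a).mpr (Or.inr (Or.inr ha))
  have heE : e ∈ M.E := (hmem e).mpr (Or.inr (Or.inl rfl))
  have hyE : y ∈ M.E := hYE hy
  have hyX : y ∉ X := fun h => hd y h hy
  have hey : e ≠ y := fun h => heY (h ▸ hy)
  have hXfin : X.Finite := M.set_finite X hXE
  have hYfin : Y.Finite := M.set_finite Y hYE
  have hXy : X ∪ {y} = insert y X := union_singleton
  -- complement identities
  have hcX : M.E \ X = insert e Y := by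
    ext a
    have h1 := hd a
    simp only [mem_diff, mem_insert_iff, hmem a]
    constructor
    · rintro ⟨h | h | h, h2⟩
      exacts [absurd h h2, Or.inl h, Or.inr h]
    · rintro (rfl | h)
      exacts [⟨Or.inr (Or.inl rfl), heX⟩, ⟨Or.inr (Or.inr h), fun hx => h1 hx h⟩]
  have hcX' : M.E \ (X ∪ {y}) = insert e (Y \ {y}) := by
    ext a
    have h1 := hd a
    simp only [mem_diff, mem_insert_iff, mem_union, mem_singleton_iff, hmem a]
    constructor
    · rintro ⟨h | h | h, h2⟩
      · exact absurd (Or.inl h) h2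
      · exact Or.inl h
      · exact Or.inr ⟨h, fun hay => h2 (Or.inr hay)⟩
    · rintro (rfl | ⟨h, hay⟩)
      · exact ⟨Or.inr (Or.inl rfl), fun hh => hh.elim heX (fun hh' => hey hh')⟩
      · exact ⟨Or.inr (Or.inr h), fun hh => hh.elim (fun hx => h1 hx h) hay⟩
  have hcY' : M.E \ (Y \ {y}) = insert y (insert e X) := by
    ext a
    have h1 := hd a
    simp only [mem_diff, mem_insert_iff, mem_singleton_iff, hmem a]
    constructor
    · rintro ⟨h | h | h, h2⟩
      · exact Or.inr (Or.inr h)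
      · exact Or.inr (Or.inl h)
      · by_cases hay : a = y
        · exact Or.inl hay
        · exact absurd ⟨h, hay⟩ h2
    · rintro (rfl | rfl | h)
      · exact ⟨Or.inr (Or.inr hy), fun hh => hh.2 rfl⟩
      · exact ⟨Or.inr (Or.inl rfl), fun hh => heY hh.1⟩
      · exact ⟨Or.inl h, fun hh => h1 h hh.1⟩
  have hEdiY : M.E \ insert e X = Y := by
    ext a
    have h1 := hd a
    simp only [mem_diff, mem_insert_iff, hmem a]
    constructor
    · rintro ⟨h | h | h, h2⟩
      · exact absurd (Or.inr h) h2
      · exact absurd (Or.inl h) h2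
      · exact h
    · intro h
      exact ⟨Or.inr (Or.inr h), fun hh => hh.elim (fun he' => heY (he' ▸ h)) (fun hx => h1 hx h)⟩
  have hUnion : (X ∪ {y}) ∪ {e} ∪ (Y \ {y}) = M.E := by
    ext a
    simp only [mem_union, mem_singleton_iff, mem_diff, hmem a]
    constructor
    · rintro ((⟨h | h⟩ | h) | ⟨h, -⟩)
      · exact Or.inl h
      · exact Or.inr (Or.inr (h ▸ hy))
      · exact Or.inr (Or.inl h)
      · exact Or.inr (Or.inr h)
    · rintro (h | h | h)
      · exact Or.inl (Or.inl (Or.inl h))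
      · exact Or.inl (Or.inr h)
      · by_cases hay : a = y
        · exact Or.inl (Or.inl (Or.inr hay))
        · exact Or.inr ⟨h, hay⟩
  have hdisj' : Disjoint (X ∪ {y}) (Y \ {y}) := by
    rw [disjoint_union_left]
    exact ⟨hdisj.mono_right diff_subset, by simp⟩
  have heX' : e ∉ X ∪ {y} := by
    rintro (h | h)
    · exact heX h
    · exact hey (mem_singleton_iff.mp h)
  have heY' : e ∉ Y \ {y} := fun h => heY h.1
  -- basic rank facts
  have hbY : r M (insert e Y) = r M Y :=
    r_eq_of_subset_closure hYE (subset_insert _ _) (insert_subset hecY (M.subset_closure Y hYE))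
  have hbX : r M (insert e X) = r M X :=
    r_eq_of_subset_closure hXE (subset_insert _ _) (insert_subset hecX (M.subset_closure X hXE))
  have hlam1 : r M X + r M Y - r M M.E = 2 := by
    have h := hlX; unfold lam at h; rw [hcX, hbY] at h; linarith
  -- cardinalities
  have hXc : 3 ≤ X.ncard := by exact_mod_cast hrX.trans (r_le_ncard hXE)
  have hYc : 3 ≤ Y.ncard := by exact_mod_cast hrY.trans (r_le_ncard hYE)
  have hYyc : 2 ≤ (Y \ {y}).ncard := by
    have := ncard_diff_singleton_add_one hy hYfin
    omega
  have hX'E : X ∪ {y} ⊆ M.E := union_subset hXE (by simpa using hyE)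
  have hY'E : Y \ {y} ⊆ M.E := diff_subset.trans hYE
  have sizeX' : 2 ≤ (X ∪ {y}).ncard := by
    have h := ncard_le_ncard (subset_union_left : X ⊆ X ∪ {y}) (hXfin.union (finite_singleton y))
    omega
  have sizecX' : 2 ≤ (M.E \ (X ∪ {y})).ncard := by
    rw [hcX']
    exact le_trans hYyc (ncard_le_ncard (subset_insert _ _) (hYfin.diff.insert e))
  have sizecY' : 2 ≤ (M.E \ (Y \ {y})).ncard := by
    rw [hcY']
    have h := ncard_le_ncard ((subset_insert e X).trans (subset_insert y _))
      ((hXfin.insert e).insert y)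
    omega
  constructor
  · -- Case 1 : y ∈ cl(X)
    intro hycl
    have hclXy : insert y X ⊆ M.closure X := insert_subset hycl (M.subset_closure X hXE)
    have hrX' : r M (insert y X) = r M X := r_eq_of_subset_closure hXE (subset_insert _ _) hclXy
    have h1 : r M (insert e (Y \ {y})) ≤ r M Y := by
      calc r M (insert e (Y \ {y})) ≤ r M (insert e Y) :=
            r_mono M (insert_subset_insert diff_subset)
        _ = r M Y := hbY
    have hlamX'le : lam M (X ∪ {y}) ≤ 2 := by
      unfold lam; rw [hcX', hXy, hrX']; linarith
    have hlamX' : lam M (X ∪ {y}) = 2 := lam_eq_two hM hX'E hlamX'le sizeX' sizecX'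
    have hr2 : r M (insert e (Y \ {y})) = r M Y := by
      have h := hlamX'; unfold lam at h; rw [hcX', hXy, hrX'] at h; linarith
    have hXey : r M (insert y (insert e X)) = r M X :=
      r_eq_of_subset_closure hXE ((subset_insert _ _).trans (subset_insert _ _))
        (insert_subset hycl (insert_subset hecX (M.subset_closure X hXE)))
    have hlamY'le : lam M (Y \ {y}) ≤ 2 := by
      unfold lam; rw [hcY', hXey]
      have := r_mono M (diff_subset : Y \ {y} ⊆ Y)
      linarith
    have hlamY' : lam M (Y \ {y}) = 2 := lam_eq_two hM hY'E hlamY'le hYyc sizecY'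
    have hrY' : r M (Y \ {y}) = r M Y := by
      have h := hlamY'; unfold lam at h; rw [hcY', hXey] at h; linarith
    have hecl : e ∈ M.closure (Y \ {y}) :=
      (mem_closure_iff_r hY'E heE).mpr (by rw [hr2, hrY'])
    exact ⟨hUnion, hdisj', heX', heY', hlamX', hlamY',
      M.closure_subset_closure subset_union_left hecX, hecl,
      by rw [hXy, hrX']; exact hrX, by rw [hrY']; exact hrY⟩
  · -- Case 2 : y ∈ cl*(X), e in no triangle
    intro hycl hno
    have hdX := r_diff_of_dual_closure hXE hyX hycl
    have heq : (M.E \ X) \ {y} = insert e (Y \ {y}) := by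
      rw [hcX]
      ext a
      simp only [mem_diff, mem_insert_iff, mem_singleton_iff]
      constructor
      · rintro ⟨rfl | h, hay⟩
        exacts [Or.inl rfl, Or.inr ⟨h, hay⟩]
      · rintro (rfl | ⟨h, hay⟩)
        exacts [⟨Or.inl rfl, hey⟩, ⟨Or.inr h, hay⟩]
    have h1 : r M (insert e (Y \ {y})) = r M Y - 1 := by
      rw [heq, hcX, hbY] at hdX; linarith
    have hy2 : y ∈ M✶.closure (insert e X) :=
      M✶.closure_subset_closure (subset_insert _ _) hycl
    have hyeX : y ∉ insert e X := by
      rintro (rfl | h)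
      exacts [hey rfl, hyX h]
    have hdY := r_diff_of_dual_closure (insert_subset heE hXE) hyeX hy2
    rw [hEdiY] at hdY
    have hrYy : r M (Y \ {y}) = r M Y - 1 := by linarith
    have hlamX'le : lam M (X ∪ {y}) ≤ 2 := by
      unfold lam; rw [hcX', hXy]
      have := (r_insert_le M : r M (insert y X) ≤ r M X + 1)
      linarith
    have hlamX' : lam M (X ∪ {y}) = 2 := lam_eq_two hM hX'E hlamX'le sizeX' sizecX'
    have h2 : r M (insert y (insert e X)) ≤ r M X + 1 :=
      le_trans (r_insert_le M) (by rw [hbX])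
    have hlamY'le : lam M (Y \ {y}) ≤ 2 := by
      unfold lam; rw [hcY']; linarith
    have hlamY' : lam M (Y \ {y}) = 2 := lam_eq_two hM hY'E hlamY'le hYyc sizecY'
    have hecl : e ∈ M.closure (Y \ {y}) :=
      (mem_closure_iff_r hY'E heE).mpr (by rw [h1, hrYy])
    have hrX'3 : (3 : ℤ) ≤ r M (X ∪ {y}) := le_trans hrX (r_mono M subset_union_left)
    have hrY'3 : (3 : ℤ) ≤ r M (Y \ {y}) := by
      by_contra hlt
      push_neg at hlt
      have hr2 : r M (Y \ {y}) = 2 := by omega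
      have h2c : 1 < (Y \ {y}).ncard := by omega
      obtain ⟨y1, y2, hy1, hy2, hne⟩ := (one_lt_ncard_iff hYfin.diff).mp h2c
      have he1 : e ≠ y1 := fun h => heY (h ▸ hy1.1)
      have he2 : e ≠ y2 := fun h => heY (h ▸ hy2.1)
      have hTsub : ({e, y1, y2} : Set α) ⊆ insert e (Y \ {y}) := by
        rintro a (rfl | rfl | rfl)
        exacts [Or.inl rfl, Or.inr hy1, Or.inr hy2]
      have hTE : ({e, y1, y2} : Set α) ⊆ M.E := hTsub.trans (insert_subset heE hY'E)
      have hTfin : ({e, y1, y2} : Set α).Finite := M.set_finite _ hTE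
      have hTcard : ({e, y1, y2} : Set α).ncard = 3 := by
        rw [ncard_insert_of_notMem (by simp [he1, he2])
          ((finite_singleton y2).insert y1), ncard_pair hne]
      have hTdep : ¬ M.Indep ({e, y1, y2} : Set α) := by
        intro hind
        have hle := le_r hind hTsub
        rw [hTcard] at hle
        have hle' : (3 : ℤ) ≤ r M (insert e (Y \ {y})) := by exact_mod_cast hle
        linarith
      have hE6 : 5 ≤ M.E.ncard := by
        have hu := ncard_union_eq hdisj hXfin hYfin
        have hle := ncard_le_ncard (union_subset hXE hYE) M.ground_finite
        omega
      refine hno {e, y1, y2} ⟨⟨hTE, hTdep, fun D hD => ?_⟩, hTcard⟩ (Or.inl rfl)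
      have hDcard : D.ncard < 3 := hTcard ▸ ncard_lt_ncard hD hTfin
      exact indep_of_small hM ((subset_of_ssubset hD).trans hTE) (by omega) hE6
    exact ⟨hUnion, hdisj', heX', heY', hlamX', hlamY',
      M.closure_subset_closure subset_union_left hecX, hecl, hrX'3, hrY'3⟩
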